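/- Let B : ℤ → M(2,ℂ) be bounded (‖B(j)‖ < M) admitting dominated splitting: there exist B-invariant line fields E^u(j), E^s(j) ⊂ ℂ², a gap constant λ > 1 and N ∈ ℤ₊ with ‖B_N(j) u(j)‖ > λ‖B_N(j) s(j)‖ for all unit vectors u(j) ∈ E^u(j), s(j) ∈ E^s(j), the angles inf_j d(E^u(j), E^s(j)) > 0, and inf_j |λ_j⁺| = η > 0 where B(j)u(j) = λ_j⁺ u(j+1) up to phase. Then there exist c > 0 and μ > 1 such that for all n ≥ 1 and all j: ‖B_n(j) u(j)‖ > c μⁿ ‖B_n(j) s(j)‖, and consequently σ₁(B_n(j)) > c μⁿ σ₂(B_n(j)). -/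

import Mathlib

noncomputable section
open Matrix
def vnorm (v : Fin 2 → ℂ) : ℝ := Real.sqrt (‖v 0‖ ^ 2 + ‖v 1‖ ^ 2)
def opNorm (A : Matrix (Fin 2) (Fin 2) ℂ) : ℝ :=
  ‖(Matrix.toEuclideanCLM (𝕜 := ℂ) (n := Fin 2) A)‖
def sigma1 (A : Matrix (Fin 2) (Fin 2) ℂ) : ℝ := opNorm A
def sigma2 (A : Matrix (Fin 2) (Fin 2) ℂ) : ℝ := ‖A.det‖ / opNorm A
def dLine (u v : Fin 2 → ℂ) : ℝ := 2 * ‖u 0 * v 1 - u 1 * v 0‖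
def prodSeq (B : ℤ → Matrix (Fin 2) (Fin 2) ℂ) : ℕ → ℤ → Matrix (Fin 2) (Fin 2) ℂ
  | 0, _ => 1
  | n+1, j => B (j + n) * prodSeq B n j
def IsMostContracted (A : Matrix (Fin 2) (Fin 2) ℂ) (w : Fin 2 → ℂ) : Prop :=
  vnorm w = 1 ∧ vnorm (A.mulVec w) = sigma2 A
def IsMostExpandedImage (A : Matrix (Fin 2) (Fin 2) ℂ) (w : Fin 2 → ℂ) : Prop :=
  vnorm w = 1 ∧ ∃ z : Fin 2 → ℂ, vnorm z = 1 ∧ vnorm (A.mulVec z) = sigma1 A ∧ ∃ c : ℂ, A.mulVec z = c • w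

/-! ### Auxiliary lemmas -/

lemma vnorm_eq (v : Fin 2 → ℂ) : vnorm v = ‖(WithLp.equiv 2 (Fin 2 → ℂ)).symm v‖ := by
  rw [EuclideanSpace.norm_eq, Fin.sum_univ_two]
  simp [vnorm]

lemma vnorm_nonneg (v : Fin 2 → ℂ) : 0 ≤ vnorm v := Real.sqrt_nonneg _

lemma vnorm_mulVec_le (A : Matrix (Fin 2) (Fin 2) ℂ) (v : Fin 2 → ℂ) :
    vnorm (A.mulVec v) ≤ opNorm A * vnorm v := by
  rw [vnorm_eq, vnorm_eq]
  have : (WithLp.equiv 2 (Fin 2 → ℂ)).symm (A.mulVec v)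
      = Matrix.toEuclideanCLM (𝕜 := ℂ) (n := Fin 2) A ((WithLp.equiv 2 (Fin 2 → ℂ)).symm v) := by
    rfl
  rw [this]
  exact (Matrix.toEuclideanCLM (𝕜 := ℂ) (n := Fin 2) A).le_opNorm _

lemma vnorm_smul (c : ℂ) (v : Fin 2 → ℂ) : vnorm (c • v) = ‖c‖ * vnorm v := by
  simp only [vnorm, Pi.smul_apply, smul_eq_mul, norm_mul, mul_pow]
  rw [← mul_add, Real.sqrt_mul (sq_nonneg _), Real.sqrt_sq (norm_nonneg c)]

lemma wedge_mulVec (A : Matrix (Fin 2) (Fin 2) ℂ) (x y : Fin 2 → ℂ) :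
    (A.mulVec x) 0 * (A.mulVec y) 1 - (A.mulVec x) 1 * (A.mulVec y) 0
      = A.det * (x 0 * y 1 - x 1 * y 0) := by
  simp [Matrix.mulVec, dotProduct, Fin.sum_univ_two, Matrix.det_fin_two]
  ring

lemma wedge_le (x y : Fin 2 → ℂ) :
    ‖x 0 * y 1 - x 1 * y 0‖ ≤ vnorm x * vnorm y := by
  set a := ‖x 0‖; set b := ‖x 1‖
  set c := ‖y 0‖; set d := ‖y 1‖
  have h1 : ‖x 0 * y 1 - x 1 * y 0‖ ≤ a * d + b * c := by
    calc ‖x 0 * y 1 - x 1 * y 0‖ ≤ ‖x 0 * y 1‖ + ‖x 1 * y 0‖ :=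
          norm_sub_le _ _
      _ = a * d + b * c := by rw [norm_mul, norm_mul]
  refine h1.trans ?_
  have ha : 0 ≤ a := norm_nonneg _
  have hb : 0 ≤ b := norm_nonneg _
  have hc : 0 ≤ c := norm_nonneg _
  have hd : 0 ≤ d := norm_nonneg _
  have key : a * d + b * c = Real.sqrt ((a*d+b*c)^2) := (Real.sqrt_sq (by positivity)).symm
  rw [key, vnorm, vnorm, ← Real.sqrt_mul (by positivity)]
  apply Real.sqrt_le_sqrt
  nlinarith [sq_nonneg (a*c - b*d)]

def prodAbs (f : ℤ → ℝ) (n : ℕ) (j : ℤ) : ℝ := ∏ i ∈ Finset.range n, f (j + i)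

lemma prodAbs_add (f : ℤ → ℝ) (a b : ℕ) (j : ℤ) :
    prodAbs f (a + b) j = prodAbs f a j * prodAbs f b (j + a) := by
  unfold prodAbs
  rw [Finset.prod_range_add]
  congr 1
  apply Finset.prod_congr rfl
  intro i _
  congr 1
  push_cast
  ring

lemma prodSeq_mulVec (B : ℤ → Matrix (Fin 2) (Fin 2) ℂ) (u : ℤ → (Fin 2 → ℂ)) (lp : ℤ → ℂ)
    (hinvu : ∀ j, (B j).mulVec (u j) = lp j • u (j+1)) (n : ℕ) (j : ℤ) :
    (prodSeq B n j).mulVec (u j) = (∏ i ∈ Finset.range n, lp (j + i)) • u (j + n) := by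
  induction n with
  | zero => simp [prodSeq]
  | succ n ih =>
    show (B (j + n) * prodSeq B n j).mulVec (u j) = _
    rw [← Matrix.mulVec_mulVec, ih, Matrix.mulVec_smul, hinvu (j + n), smul_smul,
      Finset.prod_range_succ]
    have h2 : j + ((n : ℕ) + 1 : ℕ) = j + n + 1 := by push_cast; ring
    rw [h2, mul_comm]

lemma key (p q : ℤ → ℝ) (η M' lam : ℝ) (hη : 0 < η) (hp : ∀ i, η ≤ p i)
    (hq0 : ∀ i, 0 ≤ q i) (hqM : ∀ i, q i < M') (hM1 : 1 ≤ M')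
    (hlam : 1 < lam) (N : ℕ) (hN : 1 ≤ N)
    (hgap : ∀ j, lam * prodAbs q N j < prodAbs p N j) :
    ∃ c > 0, ∃ μ > 1, ∀ n j, c * μ ^ n * prodAbs q n j ≤ prodAbs p n j ∧
      (1 ≤ n → c * μ ^ n * prodAbs q n j < prodAbs p n j) := by
  have hlam0 : (0:ℝ) < lam := lt_trans one_pos hlam
  have hNR : (0:ℝ) < (N:ℝ) := by exact_mod_cast hN
  set μ : ℝ := lam ^ ((N:ℝ)⁻¹) with hμdef
  have hμ1 : 1 < μ := by
    rw [hμdef]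
    rw [Real.one_lt_rpow_iff_of_pos hlam0]
    exact Or.inl ⟨hlam, by positivity⟩
  have hμ0 : (0:ℝ) < μ := lt_trans one_pos hμ1
  have hμN : μ ^ N = lam := by
    rw [hμdef, ← Real.rpow_natCast (lam ^ ((N:ℝ)⁻¹)) N, ← Real.rpow_mul hlam0.le,
      inv_mul_cancel₀ hNR.ne', Real.rpow_one]
  have hM0 : (0:ℝ) < M' := lt_of_lt_of_le one_pos hM1
  set t : ℝ := min (η / (μ * M')) 1 with htdef
  have ht0 : 0 < t := lt_min (by positivity) one_pos
  have ht1 : t ≤ 1 := min_le_right _ _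
  set c : ℝ := t ^ N with hcdef
  have hc0 : 0 < c := pow_pos ht0 N
  have hc1 : c ≤ 1 := pow_le_one₀ ht0.le ht1
  have hPpos : ∀ n j, 0 < prodAbs p n j := fun n j =>
    Finset.prod_pos fun i _ => lt_of_lt_of_le hη (hp _)
  have hPge : ∀ n j, η ^ n ≤ prodAbs p n j := by
    intro n j
    calc η ^ n = ∏ _i ∈ Finset.range n, η := by rw [Finset.prod_const, Finset.card_range]
      _ ≤ prodAbs p n j := Finset.prod_le_prod (fun i _ => hη.le) (fun i _ => hp _)
  have hQ0 : ∀ n j, 0 ≤ prodAbs q n j := fun n j =>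
    Finset.prod_nonneg fun i _ => hq0 _
  have hQle : ∀ n j, prodAbs q n j ≤ M' ^ n := by
    intro n j
    calc prodAbs q n j ≤ ∏ _i ∈ Finset.range n, M' :=
          Finset.prod_le_prod (fun i _ => hq0 _) (fun i _ => (hqM _).le)
      _ = M' ^ n := by rw [Finset.prod_const, Finset.card_range]
  have hQlt : ∀ n j, 1 ≤ n → prodAbs q n j < M' ^ n := by
    intro n j hn
    obtain ⟨m, rfl⟩ : ∃ m, n = 1 + m := ⟨n - 1, by omega⟩
    rw [prodAbs_add]
    have h1 : prodAbs q 1 j = q j := by simp [prodAbs]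
    rw [h1, pow_add, pow_one]
    calc q j * prodAbs q m (j + 1) ≤ q j * M' ^ m :=
          mul_le_mul_of_nonneg_left (hQle _ _) (hq0 _)
      _ < M' * M' ^ m := mul_lt_mul_of_pos_right (hqM _) (pow_pos hM0 m)
  refine ⟨c, hc0, μ, hμ1, ?_⟩
  intro n
  induction n using Nat.strong_induction_on with
  | _ n ih =>
    intro j
    rcases Nat.eq_zero_or_pos n with rfl | hn1
    · refine ⟨?_, by omega⟩
      simp only [pow_zero, mul_one, prodAbs, Finset.range_zero, Finset.prod_empty]
      linarith
    have hstrict : c * μ ^ n * prodAbs q n j < prodAbs p n j := by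
      rcases lt_or_ge n N with hnN | hnN
      · have h1 : c * μ ^ n * prodAbs q n j < c * μ ^ n * M' ^ n :=
          mul_lt_mul_of_pos_left (hQlt n j hn1) (by positivity)
        have h2 : c * μ ^ n * M' ^ n ≤ η ^ n := by
          have ht' : c ≤ t ^ n := pow_le_pow_of_le_one ht0.le ht1 hnN.le
          have ht'' : t ^ n ≤ (η / (μ * M')) ^ n :=
            pow_le_pow_left₀ ht0.le (min_le_left _ _) n
          have heq : (η / (μ * M')) ^ n * (μ ^ n * M' ^ n) = η ^ n := by
            rw [← mul_pow, ← mul_pow, div_mul_cancel₀]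
            positivity
          calc c * μ ^ n * M' ^ n ≤ (η / (μ * M')) ^ n * (μ ^ n * M' ^ n) := by
                have hmm : (0:ℝ) ≤ μ ^ n * M' ^ n := by positivity
                nlinarith [le_trans ht' ht'']
            _ = η ^ n := heq
        exact lt_of_lt_of_le (lt_of_lt_of_le h1 h2) (hPge n j)
      · obtain ⟨m, rfl⟩ : ∃ m, n = N + m := ⟨n - N, by omega⟩
        rw [prodAbs_add, prodAbs_add]
        rcases eq_or_lt_of_le (hQ0 N j) with hq | hq
        · rw [← hq]
          have := hPpos N j
          have := hPpos m (j + N)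
          nlinarith
        · have ihm := (ih m (by omega) (j + N)).1
          have hlamQ : 0 < lam * prodAbs q N j := by positivity
          calc c * μ ^ (N + m) * (prodAbs q N j * prodAbs q m (j + N))
              = (lam * prodAbs q N j) * (c * μ ^ m * prodAbs q m (j + N)) := by
                rw [pow_add, hμN]; ring
            _ ≤ (lam * prodAbs q N j) * prodAbs p m (j + N) :=
                mul_le_mul_of_nonneg_left ihm hlamQ.le
            _ < prodAbs p N j * prodAbs p m (j + N) :=
                mul_lt_mul_of_pos_right (hgap j) (hPpos m (j + N))
    exact ⟨hstrict.le, fun _ => hstrict⟩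

theorem stmt9 (B : ℤ → Matrix (Fin 2) (Fin 2) ℂ) (M : ℝ) (hM : ∀ j, opNorm (B j) < M)
    (u s : ℤ → (Fin 2 → ℂ)) (hu : ∀ j, vnorm (u j) = 1) (hs : ∀ j, vnorm (s j) = 1)
    (lp lm : ℤ → ℂ)
    (hinvu : ∀ j, (B j).mulVec (u j) = lp j • u (j+1))
    (hinvs : ∀ j, (B j).mulVec (s j) = lm j • s (j+1))
    (η : ℝ) (hη : 0 < η) (hlp : ∀ j, η ≤ ‖lp j‖)
    (lam : ℝ) (hlam : 1 < lam) (N : ℕ) (hN : 1 ≤ N)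
    (hgap : ∀ j, vnorm ((prodSeq B N j).mulVec (u j)) > lam * vnorm ((prodSeq B N j).mulVec (s j)))
    (δ : ℝ) (hδ : 0 < δ) (hangle : ∀ j, δ ≤ dLine (u j) (s j)) :
    ∃ c > 0, ∃ μ > 1, ∀ (n : ℕ), 1 ≤ n → ∀ j : ℤ,
      vnorm ((prodSeq B n j).mulVec (u j)) > c * μ ^ (n : ℝ) * vnorm ((prodSeq B n j).mulVec (s j)) ∧
      sigma1 (prodSeq B n j) > c * μ ^ (n : ℝ) * sigma2 (prodSeq B n j) := by
  set p : ℤ → ℝ := fun i => ‖lp i‖ with hpdef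
  set q : ℤ → ℝ := fun i => ‖lm i‖ with hqdef
  have hPu : ∀ n j, vnorm ((prodSeq B n j).mulVec (u j)) = prodAbs p n j := by
    intro n j
    rw [prodSeq_mulVec B u lp hinvu n j, vnorm_smul, hu, mul_one]
    exact norm_prod _ _
  have hPs : ∀ n j, vnorm ((prodSeq B n j).mulVec (s j)) = prodAbs q n j := by
    intro n j
    rw [prodSeq_mulVec B s lm hinvs n j, vnorm_smul, hs, mul_one]
    exact norm_prod _ _
  have hq0 : ∀ i, 0 ≤ q i := fun i => norm_nonneg _
  have hqM : ∀ i, q i < max M 1 := by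
    intro i
    have h1 : q i = vnorm ((B i).mulVec (s i)) := by
      rw [hinvs, vnorm_smul, hs, mul_one]
    calc q i = vnorm ((B i).mulVec (s i)) := h1
      _ ≤ opNorm (B i) * vnorm (s i) := vnorm_mulVec_le _ _
      _ = opNorm (B i) := by rw [hs, mul_one]
      _ < M := hM i
      _ ≤ max M 1 := le_max_left _ _
  have hgap' : ∀ j, lam * prodAbs q N j < prodAbs p N j := by
    intro j
    have := hgap j
    rwa [hPu, hPs] at this
  obtain ⟨c, hc0, μ, hμ1, hmain⟩ :=
    key p q η (max M 1) lam hη (fun i => hlp i) hq0 hqM (le_max_right _ _) hlam N hN hgap'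
  have hμ0 : (0:ℝ) < μ := lt_trans one_pos hμ1
  have hPpos : ∀ n j, 0 < prodAbs p n j := fun n j =>
    Finset.prod_pos fun i _ => lt_of_lt_of_le hη (hlp _)
  have hQ0 : ∀ n j, 0 ≤ prodAbs q n j := fun n j =>
    Finset.prod_nonneg fun i _ => hq0 _
  set c' : ℝ := c * min 1 (δ/2) with hc'def
  have hc'0 : 0 < c' := by
    apply mul_pos hc0
    exact lt_min one_pos (by positivity)
  have hc'c : c' ≤ c := by
    calc c' = c * min 1 (δ/2) := rfl
      _ ≤ c * 1 := mul_le_mul_of_nonneg_left (min_le_left _ _) hc0.le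
      _ = c := mul_one c
  refine ⟨c', hc'0, μ, hμ1, ?_⟩
  intro n hn j
  have hrpow : μ ^ (n : ℝ) = μ ^ n := Real.rpow_natCast μ n
  have hmain' := (hmain n j).2 hn
  constructor
  · rw [hPu, hPs, hrpow]
    calc c' * μ ^ n * prodAbs q n j ≤ c * μ ^ n * prodAbs q n j :=
          mul_le_mul_of_nonneg_right
            (mul_le_mul_of_nonneg_right hc'c (pow_nonneg hμ0.le n)) (hQ0 n j)
      _ < prodAbs p n j := hmain'
  · set An := prodSeq B n j with hAn
    have hσ1ge : prodAbs p n j ≤ sigma1 An := by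
      rw [← hPu n j]
      calc vnorm (An.mulVec (u j)) ≤ opNorm An * vnorm (u j) := vnorm_mulVec_le _ _
        _ = sigma1 An := by rw [hu, mul_one]; rfl
    have hσ1pos : 0 < sigma1 An := lt_of_lt_of_le (hPpos n j) hσ1ge
    have hw := wedge_mulVec An (u j) (s j)
    have habs : ‖(An.mulVec (u j)) 0 * (An.mulVec (s j)) 1
          - (An.mulVec (u j)) 1 * (An.mulVec (s j)) 0‖
        = ‖An.det‖ * ‖(u j) 0 * (s j) 1 - (u j) 1 * (s j) 0‖ := by
      rw [hw, norm_mul]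
    have hwle : ‖(An.mulVec (u j)) 0 * (An.mulVec (s j)) 1
          - (An.mulVec (u j)) 1 * (An.mulVec (s j)) 0‖
        ≤ prodAbs p n j * prodAbs q n j := by
      calc ‖(An.mulVec (u j)) 0 * (An.mulVec (s j)) 1
            - (An.mulVec (u j)) 1 * (An.mulVec (s j)) 0‖
          ≤ vnorm (An.mulVec (u j)) * vnorm (An.mulVec (s j)) := wedge_le _ _
        _ = prodAbs p n j * prodAbs q n j := by rw [hPu, hPs]
    have hang : δ / 2 ≤ ‖(u j) 0 * (s j) 1 - (u j) 1 * (s j) 0‖ := by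
      have := hangle j
      unfold dLine at this
      linarith
    have hdet : ‖An.det‖ * (δ / 2) ≤ sigma1 An * prodAbs q n j := by
      calc ‖An.det‖ * (δ / 2)
          ≤ ‖An.det‖ * ‖(u j) 0 * (s j) 1 - (u j) 1 * (s j) 0‖ :=
            mul_le_mul_of_nonneg_left hang (norm_nonneg _)
        _ = ‖(An.mulVec (u j)) 0 * (An.mulVec (s j)) 1
            - (An.mulVec (u j)) 1 * (An.mulVec (s j)) 0‖ := habs.symm
        _ ≤ prodAbs p n j * prodAbs q n j := hwle
        _ ≤ sigma1 An * prodAbs q n j :=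
            mul_le_mul_of_nonneg_right hσ1ge (hQ0 n j)
    have hσ2 : sigma2 An ≤ (2 / δ) * prodAbs q n j := by
      have hop : opNorm An = sigma1 An := rfl
      rw [sigma2, hop, div_le_iff₀ hσ1pos]
      calc ‖An.det‖ = ‖An.det‖ * (δ / 2) * (2 / δ) := by
            field_simp
        _ ≤ sigma1 An * prodAbs q n j * (2 / δ) :=
            mul_le_mul_of_nonneg_right hdet (by positivity)
        _ = 2 / δ * prodAbs q n j * sigma1 An := by ring
    have hσ2nonneg : 0 ≤ sigma2 An := by
      rw [sigma2]
      positivity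
    rw [hrpow]
    calc c' * μ ^ n * sigma2 An ≤ c' * μ ^ n * ((2 / δ) * prodAbs q n j) :=
          mul_le_mul_of_nonneg_left hσ2 (mul_nonneg hc'0.le (pow_nonneg hμ0.le n))
      _ = (c' * (2 / δ)) * (μ ^ n * prodAbs q n j) := by ring
      _ ≤ c * (μ ^ n * prodAbs q n j) := by
          have h1 : c' * (2 / δ) ≤ c := by
            have h2 : c' ≤ c * (δ / 2) :=
              mul_le_mul_of_nonneg_left (min_le_right _ _) hc0.le
            calc c' * (2 / δ) ≤ c * (δ / 2) * (2 / δ) :=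
                  mul_le_mul_of_nonneg_right h2 (by positivity)
              _ = c := by field_simp
          exact mul_le_mul_of_nonneg_right h1 (mul_nonneg (pow_nonneg hμ0.le n) (hQ0 n j))
      _ = c * μ ^ n * prodAbs q n j := by ring
      _ < prodAbs p n j := hmain'
      _ ≤ sigma1 An := hσ1ge
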